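/- The number of tetrahedra of minimum (nonzero) volume spanned by any set of $n$ points in $\mathbb{R}^3$ is at most $4\binom{n}{3}$. -/

import Mathlib

/-- Volume of the tetrahedron with vertices `a b c d` in `ℝ³`. -/
noncomputable def tetVol (a b c d : Fin 3 → ℝ) : ℝ :=
  |Matrix.det (Matrix.of ![b - a, c - a, d - a])| / 6

namespace TetAux

abbrev V := Fin 3 → ℝ

def cross (u v : V) : V := ![u 1 * v 2 - u 2 * v 1, u 2 * v 0 - u 0 * v 2, u 0 * v 1 - u 1 * v 0]

def dot (u v : V) : ℝ := u 0 * v 0 + u 1 * v 1 + u 2 * v 2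

def nsq (u : V) : ℝ := dot u u

def det3 (u v w : V) : ℝ := dot u (cross v w)

def faceSq (a b c : V) : ℝ := nsq (cross (b - a) (c - a))

lemma tetVol_eq (a b c d : V) : tetVol a b c d = |det3 (b - a) (c - a) (d - a)| / 6 := by
  have : Matrix.det (Matrix.of ![b - a, c - a, d - a]) = det3 (b - a) (c - a) (d - a) := by
    simp [Matrix.det_fin_three, det3, dot, cross]
    ring
  rw [tetVol, this]

lemma nsq_nonneg (u : V) : 0 ≤ nsq u := by
  simp only [nsq, dot]
  nlinarith [sq_nonneg (u 0), sq_nonneg (u 1), sq_nonneg (u 2)]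

lemma nsq_pos {u : V} (hu : u ≠ 0) : 0 < nsq u := by
  rcases (nsq_nonneg u).lt_or_eq with h | h
  · exact h
  · exfalso; apply hu; funext i
    have h0 : u 0 * u 0 + u 1 * u 1 + u 2 * u 2 = 0 := by simpa [nsq, dot] using h.symm
    have h1 : u 0 = 0 := by nlinarith [mul_self_nonneg (u 0), mul_self_nonneg (u 1), mul_self_nonneg (u 2)]
    have h2 : u 1 = 0 := by nlinarith [mul_self_nonneg (u 0), mul_self_nonneg (u 1), mul_self_nonneg (u 2)]
    have h3 : u 2 = 0 := by nlinarith [mul_self_nonneg (u 0), mul_self_nonneg (u 1), mul_self_nonneg (u 2)]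
    fin_cases i <;> simp [h1, h2, h3]

/-- det3 via dot with cross of first two. -/
lemma det3_eq_dot (u v z : V) : det3 u v z = dot (cross u v) z := by
  simp [det3, dot, cross]; ring

lemma I10 (u v : V) : det3 u v (cross u v) = nsq (cross u v) := by
  simp [det3, dot, cross, nsq]; ring

lemma I4 (u v sp : V) :
    nsq (cross u v) * nsq (cross u sp)
      = (det3 u sp (cross u v)) ^ 2 + (det3 u v sp) ^ 2 * nsq u := by
  simp [det3, dot, cross, nsq]; ring

lemma I5 (u v sp : V) :
    nsq (cross u v) * nsq (cross v sp)
      = (det3 sp v (cross u v)) ^ 2 + (det3 u v sp) ^ 2 * nsq v := by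
  simp [det3, dot, cross, nsq]; ring

lemma I6 (u v sp : V) :
    nsq (cross u v) * nsq (cross (v - u) (sp - u))
      = (det3 sp v (cross u v) + det3 u sp (cross u v) - nsq (cross u v)) ^ 2
        + (det3 u v sp) ^ 2 * nsq (v - u) := by
  simp [det3, dot, cross, nsq]; ring

lemma I7 (u v sp sp' : V) :
    nsq (cross u v) * det3 u sp sp'
      = det3 u sp (cross u v) * det3 u v sp' - det3 u sp' (cross u v) * det3 u v sp := by
  simp [det3, dot, cross, nsq]; ring

lemma I8 (u v sp sp' : V) :
    nsq (cross u v) * det3 v sp sp'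
      = det3 sp' v (cross u v) * det3 u v sp - det3 sp v (cross u v) * det3 u v sp' := by
  simp [det3, dot, cross, nsq]; ring

lemma I9 (u v sp : V) (i : Fin 3) :
    det3 sp v (cross u v) * u i + det3 u sp (cross u v) * v i
      + det3 u v sp * (cross u v) i = nsq (cross u v) * sp i := by
  fin_cases i <;> (simp [det3, dot, cross, nsq]; ring)

/- permutation lemmas for tetVol -/
lemma tetVol_t34 (p q r s : V) : tetVol p q s r = tetVol p q r s := by
  rw [tetVol_eq, tetVol_eq]
  have h : det3 (q - p) (s - p) (r - p) = -det3 (q - p) (r - p) (s - p) := by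
    simp [det3, dot, cross]; ring
  rw [h, abs_neg]

lemma tetVol_cyc3 (p q r s : V) : tetVol p r s q = tetVol p q r s := by
  rw [tetVol_eq, tetVol_eq]
  have h : det3 (r - p) (s - p) (q - p) = det3 (q - p) (r - p) (s - p) := by
    simp [det3, dot, cross]; ring
  rw [h]

lemma tetVol_cyc4 (p q r s : V) : tetVol q r s p = tetVol p q r s := by
  rw [tetVol_eq, tetVol_eq]
  have h : det3 (r - q) (s - q) (p - q) = -det3 (q - p) (r - p) (s - p) := by
    simp [det3, dot, cross]; ring
  rw [h, abs_neg]

lemma tetVol_t12 (p q r s : V) : tetVol q p r s = tetVol p q r s := by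
  rw [tetVol_eq, tetVol_eq]
  have h : det3 (p - q) (r - q) (s - q) = -det3 (q - p) (r - p) (s - p) := by
    simp [det3, dot, cross]; ring
  rw [h, abs_neg]

lemma tetVol_t23 (p q r s : V) : tetVol p r q s = tetVol p q r s := by
  rw [tetVol_eq, tetVol_eq]
  have h : det3 (r - p) (q - p) (s - p) = -det3 (q - p) (r - p) (s - p) := by
    simp [det3, dot, cross]; ring
  rw [h, abs_neg]

/- permutation lemmas for faceSq -/
lemma fs12 (a b c : V) : faceSq b a c = faceSq a b c := by
  simp [faceSq, nsq, dot, cross]; ring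

lemma fs23 (a b c : V) : faceSq a c b = faceSq a b c := by
  simp [faceSq, nsq, dot, cross]; ring

lemma fs_cyc (a b c : V) : faceSq b c a = faceSq a b c := by
  simp [faceSq, nsq, dot, cross]; ring


def GoodT (v0 : ℝ) (p q r s : V) : Prop :=
  tetVol p q r s = v0 ∧ faceSq p q s ≤ faceSq p q r ∧ faceSq p r s ≤ faceSq p q r ∧
    faceSq q r s ≤ faceSq p q r

lemma good_t12 {v0 : ℝ} {p q r s : V} (h : GoodT v0 p q r s) : GoodT v0 q p r s := by
  obtain ⟨h1, h2, h3, h4⟩ := h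
  refine ⟨?_, ?_, ?_, ?_⟩
  · rw [tetVol_t12]; exact h1
  · rw [fs12 p q s, fs12 p q r]; exact h2
  · rw [fs12 p q r]; exact h4
  · rw [fs12 p q r]; exact h3

lemma good_t23 {v0 : ℝ} {p q r s : V} (h : GoodT v0 p q r s) : GoodT v0 p r q s := by
  obtain ⟨h1, h2, h3, h4⟩ := h
  refine ⟨?_, ?_, ?_, ?_⟩
  · rw [tetVol_t23]; exact h1
  · rw [fs23 p q r]; exact h3
  · rw [fs23 p q r]; exact h2
  · rw [fs23 p q r, fs12 q r s]; exact h4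

lemma card_triple_le (a b c : V) : ({a, b, c} : Finset V).card ≤ 3 := by
  have t1 := Finset.card_insert_le a ({b, c} : Finset V)
  have t2 := Finset.card_insert_le b ({c} : Finset V)
  simp only [Finset.card_singleton] at t2
  omega

lemma card_triple_eq {a b c : V} (hab : a ≠ b) (hac : a ≠ c) (hbc : b ≠ c) :
    ({a, b, c} : Finset V).card = 3 := by
  rw [Finset.card_insert_of_notMem (by simp [hab, hac]),
    Finset.card_insert_of_notMem (by simp [hbc]), Finset.card_singleton]

lemma dist4 {p q r s : V} (h : ({p, q, r, s} : Finset V).card = 4) :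
    p ≠ q ∧ p ≠ r ∧ p ≠ s ∧ q ≠ r ∧ q ≠ s ∧ r ≠ s := by
  refine ⟨?_, ?_, ?_, ?_, ?_, ?_⟩
  · rintro rfl
    have e : ({p, p, r, s} : Finset V) = {p, r, s} := by ext x; simp; try tauto
    rw [e] at h; have := card_triple_le p r s; omega
  · rintro rfl
    have e : ({p, q, p, s} : Finset V) = {p, q, s} := by ext x; simp; try tauto
    rw [e] at h; have := card_triple_le p q s; omega
  · rintro rfl
    have e : ({p, q, r, p} : Finset V) = {p, q, r} := by ext x; simp; try tauto
    rw [e] at h; have := card_triple_le p q r; omega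
  · rintro rfl
    have e : ({p, q, q, s} : Finset V) = {p, q, s} := by ext x; simp; try tauto
    rw [e] at h; have := card_triple_le p q s; omega
  · rintro rfl
    have e : ({p, q, r, q} : Finset V) = {p, q, r} := by ext x; simp; try tauto
    rw [e] at h; have := card_triple_le p q r; omega
  · rintro rfl
    have e : ({p, q, r, r} : Finset V) = {p, q, r} := by ext x; simp; try tauto
    rw [e] at h; have := card_triple_le p q r; omega

lemma triple_eq_iff {p q r P Q R : V} (hpq : p ≠ q) (hpr : p ≠ r) (hqr : q ≠ r)
    (h : ({p, q, r} : Finset V) = {P, Q, R}) :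
    (P = p ∧ Q = q ∧ R = r) ∨ (P = p ∧ Q = r ∧ R = q) ∨ (P = q ∧ Q = p ∧ R = r) ∨
    (P = q ∧ Q = r ∧ R = p) ∨ (P = r ∧ Q = p ∧ R = q) ∨ (P = r ∧ Q = q ∧ R = p) := by
  have hP : P = p ∨ P = q ∨ P = r := by
    have : P ∈ ({p, q, r} : Finset V) := by rw [h]; simp
    simpa using this
  have hQ : Q = p ∨ Q = q ∨ Q = r := by
    have : Q ∈ ({p, q, r} : Finset V) := by rw [h]; simp
    simpa using this
  have hR : R = p ∨ R = q ∨ R = r := by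
    have : R ∈ ({p, q, r} : Finset V) := by rw [h]; simp
    simpa using this
  have hp : p = P ∨ p = Q ∨ p = R := by
    have : p ∈ ({P, Q, R} : Finset V) := by rw [← h]; simp
    simpa using this
  have hq : q = P ∨ q = Q ∨ q = R := by
    have : q ∈ ({P, Q, R} : Finset V) := by rw [← h]; simp
    simpa using this
  have hr : r = P ∨ r = Q ∨ r = R := by
    have : r ∈ ({P, Q, R} : Finset V) := by rw [← h]; simp
    simpa using this
  clear h
  rcases hP with rfl | rfl | rfl <;> rcases hQ with rfl | rfl | rfl <;>
    rcases hR with rfl | rfl | rfl <;>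
    first
      | (simp_all; done)
      | (simp_all; aesop)

lemma good_of_triple_eq {v0 : ℝ} {p q r s P Q R : V} (hG : GoodT v0 p q r s)
    (hpq : p ≠ q) (hpr : p ≠ r) (hqr : q ≠ r)
    (h : ({p, q, r} : Finset V) = {P, Q, R}) : GoodT v0 P Q R s := by
  rcases triple_eq_iff hpq hpr hqr h with ⟨rfl, rfl, rfl⟩ | ⟨rfl, rfl, rfl⟩ |
    ⟨rfl, rfl, rfl⟩ | ⟨rfl, rfl, rfl⟩ | ⟨rfl, rfl, rfl⟩ | ⟨rfl, rfl, rfl⟩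
  · exact hG
  · exact good_t23 hG
  · exact good_t12 hG
  · exact good_t23 (good_t12 hG)
  · exact good_t12 (good_t23 hG)
  · exact good_t12 (good_t23 (good_t12 hG))

lemma exists_good {v0 : ℝ} {T : Finset V} {p q r s : V} (hT : T = {p, q, r, s})
    (hvol : tetVol p q r s = v0) :
    ∃ z : V × V × V × V, T = {z.1, z.2.1, z.2.2.1, z.2.2.2} ∧
      GoodT v0 z.1 z.2.1 z.2.2.1 z.2.2.2 := by
  have key : ∃ m : ℝ, (faceSq q r s ≤ m ∧ faceSq p r s ≤ m ∧ faceSq p q s ≤ m ∧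
      faceSq p q r ≤ m) ∧
      (m = faceSq q r s ∨ m = faceSq p r s ∨ m = faceSq p q s ∨ m = faceSq p q r) := by
    refine ⟨max (max (faceSq q r s) (faceSq p r s)) (max (faceSq p q s) (faceSq p q r)),
      ⟨le_max_of_le_left (le_max_left _ _), le_max_of_le_left (le_max_right _ _),
        le_max_of_le_right (le_max_left _ _), le_max_of_le_right (le_max_right _ _)⟩, ?_⟩
    rcases max_choice (max (faceSq q r s) (faceSq p r s)) (max (faceSq p q s) (faceSq p q r))
        with h | h <;> rw [h] <;>
      [rcases max_choice (faceSq q r s) (faceSq p r s) with h' | h';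
        rcases max_choice (faceSq p q s) (faceSq p q r) with h' | h'] <;> rw [h'] <;> tauto
  obtain ⟨m, ⟨le1, le2, le3, le4⟩, hM⟩ := key
  rcases hM with hM | hM | hM | hM
  · -- max is face q r s : use (q, r, s, p)
    have hset : T = ({q, r, s, p} : Finset V) := by rw [hT]; ext x; simp; try tauto
    have hG : GoodT v0 q r s p := by
      refine ⟨by rw [tetVol_cyc4]; exact hvol, ?_, ?_, ?_⟩
      · rw [fs_cyc p q r]; linarith
      · rw [fs_cyc p q s]; linarith
      · rw [fs_cyc p r s]; linarith
    exact ⟨(q, r, s, p), hset, hG⟩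
  · -- max is face p r s : use (p, r, s, q)
    have hset : T = ({p, r, s, q} : Finset V) := by rw [hT]; ext x; simp; try tauto
    have hG : GoodT v0 p r s q := by
      refine ⟨by rw [tetVol_cyc3]; exact hvol, ?_, ?_, ?_⟩
      · rw [fs23 p q r]; linarith
      · rw [fs23 p q s]; linarith
      · rw [fs_cyc q r s]; linarith
    exact ⟨(p, r, s, q), hset, hG⟩
  · -- max is face p q s : use (p, q, s, r)
    have hset : T = ({p, q, s, r} : Finset V) := by rw [hT]; ext x; simp; try tauto
    have hG : GoodT v0 p q s r := by
      refine ⟨by rw [tetVol_t34]; exact hvol, ?_, ?_, ?_⟩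
      · linarith
      · rw [fs23 p r s]; linarith
      · rw [fs23 q r s]; linarith
    exact ⟨(p, q, s, r), hset, hG⟩
  · exact ⟨(p, q, r, s), hT, hvol, by linarith, by linarith, by linarith⟩

lemma twoval {B : Finset ℝ} {E : ℝ} (h1 : ∀ b ∈ B, |b| < E)
    (h2 : ∀ b ∈ B, ∀ c ∈ B, b = c ∨ E ≤ |b - c|) : B.card ≤ 2 := by
  by_contra hc
  push_neg at hc
  rw [Finset.two_lt_card] at hc
  obtain ⟨a, ha, b, hb, c, hcm, hab, hac, hbc⟩ := hc
  have Hab := (h2 a ha b hb).resolve_left hab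
  have Hac := (h2 a ha c hcm).resolve_left hac
  have Hbc := (h2 b hb c hcm).resolve_left hbc
  have ha' := abs_lt.mp (h1 a ha)
  have hb' := abs_lt.mp (h1 b hb)
  have hc' := abs_lt.mp (h1 c hcm)
  rcases le_abs.mp Hab with h | h <;> rcases le_abs.mp Hac with h' | h' <;>
    rcases le_abs.mp Hbc with h'' | h'' <;> linarith [ha'.1, ha'.2, hb'.1, hb'.2, hc'.1, hc'.2]


/-! Apex coordinates relative to an ordered triple `P Q R`. -/

noncomputable def gg (P Q R s : V) : ℝ := det3 (Q - P) (R - P) (s - P)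
noncomputable def aa (P Q R s : V) : ℝ := det3 (s - P) (R - P) (cross (Q - P) (R - P))
noncomputable def bb (P Q R s : V) : ℝ := det3 (Q - P) (s - P) (cross (Q - P) (R - P))
noncomputable def DD (P Q R : V) : ℝ := nsq (cross (Q - P) (R - P))
noncomputable def xx (P Q R s : V) : ℝ := aa P Q R s * gg P Q R s
noncomputable def yy (P Q R s : V) : ℝ := bb P Q R s * gg P Q R s

lemma J4 (P Q R s : V) :
    DD P Q R * faceSq P Q s = bb P Q R s ^ 2 + gg P Q R s ^ 2 * nsq (Q - P) :=
  I4 (Q - P) (R - P) (s - P)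

lemma J5 (P Q R s : V) :
    DD P Q R * faceSq P R s = aa P Q R s ^ 2 + gg P Q R s ^ 2 * nsq (R - P) :=
  I5 (Q - P) (R - P) (s - P)

lemma J6 (P Q R s : V) :
    DD P Q R * faceSq Q R s
      = (aa P Q R s + bb P Q R s - DD P Q R) ^ 2 + gg P Q R s ^ 2 * nsq (R - Q) := by
  have h := I6 (Q - P) (R - P) (s - P)
  rw [sub_sub_sub_cancel_right, sub_sub_sub_cancel_right] at h
  exact h

lemma J7 (P Q R s s' : V) :
    DD P Q R * det3 (Q - P) (s - P) (s' - P)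
      = bb P Q R s * gg P Q R s' - bb P Q R s' * gg P Q R s :=
  I7 (Q - P) (R - P) (s - P) (s' - P)

lemma J8 (P Q R s s' : V) :
    DD P Q R * det3 (R - P) (s - P) (s' - P)
      = aa P Q R s' * gg P Q R s - aa P Q R s * gg P Q R s' :=
  I8 (Q - P) (R - P) (s - P) (s' - P)

lemma J9 (P Q R s : V) (i : Fin 3) :
    aa P Q R s * (Q - P) i + bb P Q R s * (R - P) i
      + gg P Q R s * (cross (Q - P) (R - P)) i = DD P Q R * (s - P) i :=
  I9 (Q - P) (R - P) (s - P) i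

lemma Jvol (P Q R s : V) : tetVol P Q R s = |gg P Q R s| / 6 := tetVol_eq P Q R s

/-- The core counting lemma: at most 4 apexes for a fixed ordered triple that is a
maximal-area face. -/
lemma core {v0 : ℝ} (hv0 : 0 < v0) (S : Finset V)
    (hmin : ∀ p q r s : V, p ∈ S → q ∈ S → r ∈ S → s ∈ S →
      tetVol p q r s ≠ 0 → v0 ≤ tetVol p q r s)
    {P Q R : V} (hPS : P ∈ S) (hQS : Q ∈ S) (hRS : R ∈ S)
    (hPQ : P ≠ Q) (hPR : P ≠ R) (hQR : Q ≠ R)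
    (A : Finset V) (hA : ∀ s, s ∈ A ↔ s ∈ S ∧ GoodT v0 P Q R s) : A.card ≤ 4 := by
  classical
  rcases A.eq_empty_or_nonempty with hemp | ⟨s₀, hs₀⟩
  · simp [hemp]
  -- basic facts
  have hmem : ∀ s ∈ A, s ∈ S := fun s hs => ((hA s).1 hs).1
  have hgood : ∀ s ∈ A, GoodT v0 P Q R s := fun s hs => ((hA s).1 hs).2
  have habs : ∀ s ∈ A, |gg P Q R s| = 6 * v0 := by
    intro s hs
    have h := ((hgood s hs).1 : tetVol P Q R s = v0)
    rw [Jvol] at h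
    linarith
  have hg2 : ∀ s ∈ A, gg P Q R s ^ 2 = 36 * v0 ^ 2 := by
    intro s hs
    rw [← sq_abs, habs s hs]; ring
  have hDpos : 0 < DD P Q R := by
    rcases eq_or_ne (cross (Q - P) (R - P)) 0 with hw | hw
    · exfalso
      have h0 : gg P Q R s₀ = 0 := by
        simp only [gg]; rw [det3_eq_dot, hw]; simp [dot]
      have := habs s₀ hs₀
      rw [h0] at this
      simp at this
      linarith
    · exact nsq_pos hw
  have hupos : 0 < nsq (Q - P) := nsq_pos (sub_ne_zero.mpr (Ne.symm hPQ))
  have hvpos : 0 < nsq (R - P) := nsq_pos (sub_ne_zero.mpr (Ne.symm hPR))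
  have hvupos : 0 < nsq (R - Q) := nsq_pos (sub_ne_zero.mpr (Ne.symm hQR))
  set D := DD P Q R with hD
  set E := 6 * v0 * D with hE
  have hEpos : 0 < E := by positivity
  -- region bounds
  have hbb : ∀ s ∈ A, bb P Q R s ^ 2 < D ^ 2 := by
    intro s hs
    have h4 := J4 P Q R s
    have hface : faceSq P Q s ≤ faceSq P Q R := (hgood s hs).2.1
    have hfR : faceSq P Q R = D := rfl
    have hgpos : 0 < gg P Q R s ^ 2 * nsq (Q - P) := by
      rw [hg2 s hs]; positivity
    have hDf : D * faceSq P Q s ≤ D * D :=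
      le_trans (mul_le_mul_of_nonneg_left hface hDpos.le) (by rw [hfR])
    nlinarith [h4, hDf, hgpos]
  have haa : ∀ s ∈ A, aa P Q R s ^ 2 < D ^ 2 := by
    intro s hs
    have h5 := J5 P Q R s
    have hface : faceSq P R s ≤ faceSq P Q R := (hgood s hs).2.2.1
    have hfR : faceSq P Q R = D := rfl
    have hgpos : 0 < gg P Q R s ^ 2 * nsq (R - P) := by
      rw [hg2 s hs]; positivity
    have hDf : D * faceSq P R s ≤ D * D :=
      le_trans (mul_le_mul_of_nonneg_left hface hDpos.le) (by rw [hfR])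
    nlinarith [h5, hDf, hgpos]
  have hab : ∀ s ∈ A, 0 < aa P Q R s + bb P Q R s ∧ aa P Q R s + bb P Q R s < 2 * D := by
    intro s hs
    have h6 := J6 P Q R s
    have hface : faceSq Q R s ≤ faceSq P Q R := (hgood s hs).2.2.2
    have hfR : faceSq P Q R = D := rfl
    have hgpos : 0 < gg P Q R s ^ 2 * nsq (R - Q) := by
      rw [hg2 s hs]; positivity
    have hDf : D * faceSq Q R s ≤ D * D :=
      le_trans (mul_le_mul_of_nonneg_left hface hDpos.le) (by rw [hfR])
    have hsq : (aa P Q R s + bb P Q R s - D) ^ 2 < D ^ 2 := by nlinarith [h6, hDf, hgpos]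
    constructor <;> nlinarith [hsq, hDpos]
  -- pairwise gap conditions
  have hyy : ∀ s ∈ A, ∀ s' ∈ A,
      yy P Q R s = yy P Q R s' ∨ E ≤ |yy P Q R s - yy P Q R s'| := by
    intro s hs s' hs'
    have key1 : |bb P Q R s * gg P Q R s' - bb P Q R s' * gg P Q R s|
        = |yy P Q R s - yy P Q R s'| := by
      rcases (abs_eq (by linarith : (0:ℝ) ≤ 6 * v0)).mp (habs s hs) with hgs | hgs <;>
        rcases (abs_eq (by linarith : (0:ℝ) ≤ 6 * v0)).mp (habs s' hs') with hgs' | hgs'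
      · simp only [yy]; rw [hgs, hgs', abs_eq_abs]; left; ring
      · simp only [yy]; rw [hgs, hgs', abs_eq_abs]; right; ring
      · simp only [yy]; rw [hgs, hgs', abs_eq_abs]; right; ring
      · simp only [yy]; rw [hgs, hgs', abs_eq_abs]; left; ring
    have key2 : D * |det3 (Q - P) (s - P) (s' - P)| = |yy P Q R s - yy P Q R s'| := by
      rw [← key1, ← J7 P Q R s s', abs_mul, abs_of_pos hDpos]
    have hvol : tetVol P Q s s' = |det3 (Q - P) (s - P) (s' - P)| / 6 := tetVol_eq P Q s s'
    by_cases hz : tetVol P Q s s' = 0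
    · left
      have h0 : |det3 (Q - P) (s - P) (s' - P)| = 0 := by
        rw [hvol] at hz; linarith
      have : |yy P Q R s - yy P Q R s'| = 0 := by rw [← key2, h0]; ring
      have := abs_eq_zero.mp this
      linarith [sub_eq_zero.mp this]
    · right
      have hge := hmin P Q s s' hPS hQS (hmem s hs) (hmem s' hs') hz
      rw [hvol] at hge
      have h6 : 6 * v0 ≤ |det3 (Q - P) (s - P) (s' - P)| := by linarith
      calc E = 6 * v0 * D := hE
        _ ≤ |det3 (Q - P) (s - P) (s' - P)| * D := by
            exact mul_le_mul_of_nonneg_right h6 hDpos.le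
        _ = D * |det3 (Q - P) (s - P) (s' - P)| := by ring
        _ = _ := key2
  have hxx : ∀ s ∈ A, ∀ s' ∈ A,
      xx P Q R s = xx P Q R s' ∨ E ≤ |xx P Q R s - xx P Q R s'| := by
    intro s hs s' hs'
    have key1 : |aa P Q R s' * gg P Q R s - aa P Q R s * gg P Q R s'|
        = |xx P Q R s - xx P Q R s'| := by
      rcases (abs_eq (by linarith : (0:ℝ) ≤ 6 * v0)).mp (habs s hs) with hgs | hgs <;>
        rcases (abs_eq (by linarith : (0:ℝ) ≤ 6 * v0)).mp (habs s' hs') with hgs' | hgs'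
      · simp only [xx]; rw [hgs, hgs', abs_eq_abs]; right; ring
      · simp only [xx]; rw [hgs, hgs', abs_eq_abs]; left; ring
      · simp only [xx]; rw [hgs, hgs', abs_eq_abs]; left; ring
      · simp only [xx]; rw [hgs, hgs', abs_eq_abs]; right; ring
    have key2 : D * |det3 (R - P) (s - P) (s' - P)| = |xx P Q R s - xx P Q R s'| := by
      rw [← key1, ← J8 P Q R s s', abs_mul, abs_of_pos hDpos]
    have hvol : tetVol P R s s' = |det3 (R - P) (s - P) (s' - P)| / 6 := tetVol_eq P R s s'
    by_cases hz : tetVol P R s s' = 0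
    · left
      have h0 : |det3 (R - P) (s - P) (s' - P)| = 0 := by
        rw [hvol] at hz; linarith
      have : |xx P Q R s - xx P Q R s'| = 0 := by rw [← key2, h0]; ring
      have := abs_eq_zero.mp this
      linarith [sub_eq_zero.mp this]
    · right
      have hge := hmin P R s s' hPS hRS (hmem s hs) (hmem s' hs') hz
      rw [hvol] at hge
      have h6 : 6 * v0 ≤ |det3 (R - P) (s - P) (s' - P)| := by linarith
      calc E = 6 * v0 * D := hE
        _ ≤ |det3 (R - P) (s - P) (s' - P)| * D := by
            exact mul_le_mul_of_nonneg_right h6 hDpos.le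
        _ = D * |det3 (R - P) (s - P) (s' - P)| := by ring
        _ = _ := key2
  -- bounds on |xx| and |yy|
  have hxlt : ∀ s ∈ A, |xx P Q R s| < E := by
    intro s hs
    have h1 : xx P Q R s ^ 2 = aa P Q R s ^ 2 * (36 * v0 ^ 2) := by
      simp only [xx]; rw [mul_pow, hg2 s hs]
    have h2 : xx P Q R s ^ 2 < E ^ 2 := by
      have := haa s hs
      rw [h1]
      have hE2 : E ^ 2 = D ^ 2 * (36 * v0 ^ 2) := by rw [hE]; ring
      rw [hE2]
      have h36 : (0:ℝ) < 36 * v0 ^ 2 := by positivity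
      exact mul_lt_mul_of_pos_right this h36
    nlinarith [sq_abs (xx P Q R s), abs_nonneg (xx P Q R s), hEpos]
  have hylt : ∀ s ∈ A, |yy P Q R s| < E := by
    intro s hs
    have h1 : yy P Q R s ^ 2 = bb P Q R s ^ 2 * (36 * v0 ^ 2) := by
      simp only [yy]; rw [mul_pow, hg2 s hs]
    have h2 : yy P Q R s ^ 2 < E ^ 2 := by
      have := hbb s hs
      rw [h1]
      have hE2 : E ^ 2 = D ^ 2 * (36 * v0 ^ 2) := by rw [hE]; ring
      rw [hE2]
      have h36 : (0:ℝ) < 36 * v0 ^ 2 := by positivity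
      exact mul_lt_mul_of_pos_right this h36
    nlinarith [sq_abs (yy P Q R s), abs_nonneg (yy P Q R s), hEpos]
  -- injectivity
  have hinj : ∀ s ∈ A, ∀ s' ∈ A, xx P Q R s = xx P Q R s' → yy P Q R s = yy P Q R s' →
      s = s' := by
    intro s hs s' hs' hx hy
    rcases (abs_eq (by linarith : (0:ℝ) ≤ 6 * v0)).mp (habs s hs) with hgs | hgs <;>
      rcases (abs_eq (by linarith : (0:ℝ) ≤ 6 * v0)).mp (habs s' hs') with hgs' | hgs'
    case inl.inr =>
      exfalso
      have h1 := (hab s hs).1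
      have h2 := (hab s' hs').1
      have e1 : xx P Q R s + yy P Q R s = (aa P Q R s + bb P Q R s) * (6 * v0) := by
        simp only [xx, yy]; rw [hgs]; ring
      have e2 : xx P Q R s' + yy P Q R s' = (aa P Q R s' + bb P Q R s') * (-(6 * v0)) := by
        simp only [xx, yy]; rw [hgs']; ring
      nlinarith [h1, h2, hv0]
    case inr.inl =>
      exfalso
      have h1 := (hab s hs).1
      have h2 := (hab s' hs').1
      have e1 : xx P Q R s + yy P Q R s = (aa P Q R s + bb P Q R s) * (-(6 * v0)) := by
        simp only [xx, yy]; rw [hgs]; ring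
      have e2 : xx P Q R s' + yy P Q R s' = (aa P Q R s' + bb P Q R s') * (6 * v0) := by
        simp only [xx, yy]; rw [hgs']; ring
      nlinarith [h1, h2, hv0]
    all_goals {
      have hgne : gg P Q R s ≠ 0 := by rw [hgs]; intro h; simp at h; linarith
      have hgeq : gg P Q R s = gg P Q R s' := by rw [hgs, hgs']
      have hgne' : gg P Q R s' ≠ 0 := hgeq ▸ hgne
      have hAeq : aa P Q R s = aa P Q R s' := by
        have h0 : aa P Q R s * gg P Q R s = aa P Q R s' * gg P Q R s' := hx
        rw [hgeq] at h0
        exact mul_right_cancel₀ hgne' h0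
      have hBeq : bb P Q R s = bb P Q R s' := by
        have h0 : bb P Q R s * gg P Q R s = bb P Q R s' * gg P Q R s' := hy
        rw [hgeq] at h0
        exact mul_right_cancel₀ hgne' h0
      funext i
      have h9 := J9 P Q R s i
      have h9' := J9 P Q R s' i
      rw [hAeq, hBeq, hgeq] at h9
      have hDi : D * (s - P) i = D * (s' - P) i := by rw [← h9, ← h9']
      have := mul_left_cancel₀ (ne_of_gt hDpos) hDi
      simpa [Pi.sub_apply, sub_left_inj] using this
    }
  -- counting
  have hinj' : Set.InjOn (fun s => (xx P Q R s, yy P Q R s)) ↑A := by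
    intro s hs s' hs' h
    simp only [Prod.mk.injEq] at h
    exact hinj s (by simpa using hs) s' (by simpa using hs') h.1 h.2
  have hcard1 : A.card = (A.image (fun s => (xx P Q R s, yy P Q R s))).card :=
    (Finset.card_image_of_injOn hinj').symm
  have hsub : A.image (fun s => (xx P Q R s, yy P Q R s))
      ⊆ (A.image (xx P Q R)) ×ˢ (A.image (yy P Q R)) := by
    intro z hz
    simp only [Finset.mem_image] at hz
    obtain ⟨s, hs, rfl⟩ := hz
    rw [Finset.mem_product]
    exact ⟨Finset.mem_image_of_mem _ hs, Finset.mem_image_of_mem _ hs⟩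
  have hx2 : (A.image (xx P Q R)).card ≤ 2 := by
    apply twoval (E := E)
    · intro b hb
      obtain ⟨s, hs, rfl⟩ := Finset.mem_image.mp hb
      exact hxlt s hs
    · intro b hb c hc
      obtain ⟨s, hs, rfl⟩ := Finset.mem_image.mp hb
      obtain ⟨s', hs', rfl⟩ := Finset.mem_image.mp hc
      exact hxx s hs s' hs'
  have hy2 : (A.image (yy P Q R)).card ≤ 2 := by
    apply twoval (E := E)
    · intro b hb
      obtain ⟨s, hs, rfl⟩ := Finset.mem_image.mp hb
      exact hylt s hs
    · intro b hb c hc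
      obtain ⟨s, hs, rfl⟩ := Finset.mem_image.mp hb
      obtain ⟨s', hs', rfl⟩ := Finset.mem_image.mp hc
      exact hyy s hs s' hs'
  calc A.card = (A.image (fun s => (xx P Q R s, yy P Q R s))).card := hcard1
    _ ≤ ((A.image (xx P Q R)) ×ˢ (A.image (yy P Q R))).card := Finset.card_le_card hsub
    _ = (A.image (xx P Q R)).card * (A.image (yy P Q R)).card := Finset.card_product _ _
    _ ≤ 2 * 2 := Nat.mul_le_mul hx2 hy2
    _ = 4 := rfl


open Classical in
/-- Choice of a labelled tetrahedron whose first three vertices form a maximal-area face. -/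
noncomputable def pick (v0 : ℝ) (T : Finset V) : V × V × V × V :=
  if h : ∃ z : V × V × V × V, T = {z.1, z.2.1, z.2.2.1, z.2.2.2} ∧
      GoodT v0 z.1 z.2.1 z.2.2.1 z.2.2.2 then h.choose else default

lemma pick_spec {v0 : ℝ} {T : Finset V}
    (h : ∃ z : V × V × V × V, T = {z.1, z.2.1, z.2.2.1, z.2.2.2} ∧
      GoodT v0 z.1 z.2.1 z.2.2.1 z.2.2.2) :
    T = {(pick v0 T).1, (pick v0 T).2.1, (pick v0 T).2.2.1, (pick v0 T).2.2.2} ∧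
      GoodT v0 (pick v0 T).1 (pick v0 T).2.1 (pick v0 T).2.2.1 (pick v0 T).2.2.2 := by
  unfold pick
  rw [dif_pos h]
  exact h.choose_spec

end TetAux

set_option maxHeartbeats 1000000 in
/-- the number of tetrahedra of minimum (nonzero) volume spanned by
any set of `n` points in `ℝ³` is at most `4 * (n choose 3)`. -/
theorem stmt1 (n : ℕ) (S : Finset (Fin 3 → ℝ)) (hn : S.card = n)
    (v0 : ℝ) (hv0 : 0 < v0)
    (hmin : ∀ p q r s : Fin 3 → ℝ, p ∈ S → q ∈ S → r ∈ S → s ∈ S →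
      tetVol p q r s ≠ 0 → v0 ≤ tetVol p q r s)
    (hattained : ∃ p q r s : Fin 3 → ℝ, p ∈ S ∧ q ∈ S ∧ r ∈ S ∧ s ∈ S ∧
      tetVol p q r s = v0) :
    {T : Finset (Fin 3 → ℝ) | T ⊆ S ∧ ∃ p q r s : Fin 3 → ℝ,
        T = {p, q, r, s} ∧ T.card = 4 ∧ tetVol p q r s = v0}.ncard
      ≤ 4 * n.choose 3 := by
  classical
  open TetAux in
  set M' : Finset (Finset (Fin 3 → ℝ)) := (S.powersetCard 4).filter
      (fun T => ∃ p q r s : Fin 3 → ℝ, T = {p, q, r, s} ∧ tetVol p q r s = v0) with hM'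
  have hseteq : {T : Finset (Fin 3 → ℝ) | T ⊆ S ∧ ∃ p q r s : Fin 3 → ℝ,
      T = {p, q, r, s} ∧ T.card = 4 ∧ tetVol p q r s = v0} = ↑M' := by
    ext T
    rw [Set.mem_setOf_eq, Finset.mem_coe, hM', Finset.mem_filter, Finset.mem_powersetCard]
    constructor
    · rintro ⟨hTS, p, q, r, s, h1, h2, h3⟩
      exact ⟨⟨hTS, h2⟩, p, q, r, s, h1, h3⟩
    · rintro ⟨⟨hTS, hc⟩, p, q, r, s, h1, h3⟩
      exact ⟨hTS, p, q, r, s, h1, hc, h3⟩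
  rw [hseteq, Set.ncard_coe_finset]
  have hM'mem : ∀ T ∈ M', T ⊆ S ∧ T.card = 4 ∧
      ∃ z : TetAux.V × TetAux.V × TetAux.V × TetAux.V,
        T = {z.1, z.2.1, z.2.2.1, z.2.2.2} ∧ TetAux.GoodT v0 z.1 z.2.1 z.2.2.1 z.2.2.2 := by
    intro T hT
    rw [hM', Finset.mem_filter, Finset.mem_powersetCard] at hT
    obtain ⟨⟨hTS, hc⟩, p, q, r, s, h1, h3⟩ := hT
    exact ⟨hTS, hc, TetAux.exists_good h1 h3⟩
  have hmaps : ∀ T ∈ M',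
      ({(TetAux.pick v0 T).1, (TetAux.pick v0 T).2.1, (TetAux.pick v0 T).2.2.1} :
        Finset (Fin 3 → ℝ)) ∈ S.powersetCard 3 := by
    intro T hT
    obtain ⟨hTS, hc, hz⟩ := hM'mem T hT
    obtain ⟨hTz, hG⟩ := TetAux.pick_spec hz
    rw [hTz] at hc
    obtain ⟨h12, h13, h14, h23, h24, h34⟩ := TetAux.dist4 hc
    rw [Finset.mem_powersetCard]
    constructor
    · intro x hx
      apply hTS
      rw [hTz]
      simp only [Finset.mem_insert, Finset.mem_singleton] at hx ⊢
      tauto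
    · exact TetAux.card_triple_eq h12 h13 h23
  have hfib : ∀ t : Finset (Fin 3 → ℝ), ∀ fib : Finset (Finset (Fin 3 → ℝ)),
      (∀ T, T ∈ fib ↔ T ∈ M' ∧
        ({(TetAux.pick v0 T).1, (TetAux.pick v0 T).2.1, (TetAux.pick v0 T).2.2.1} :
          Finset (Fin 3 → ℝ)) = t) → fib.card ≤ 4 := by
    intro t fib hfibspec
    rcases fib.eq_empty_or_nonempty with he | ⟨T₀, hT₀⟩
    · simp [he]
    have hT₀m := (hfibspec T₀).mp hT₀
    obtain ⟨hT₀S, hc₀, hz₀⟩ := hM'mem T₀ hT₀m.1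
    obtain ⟨hTz₀, hG₀⟩ := TetAux.pick_spec hz₀
    have hface₀ : ({(TetAux.pick v0 T₀).1, (TetAux.pick v0 T₀).2.1,
        (TetAux.pick v0 T₀).2.2.1} : Finset (Fin 3 → ℝ)) = t := hT₀m.2
    set P := (TetAux.pick v0 T₀).1 with hP
    set Q := (TetAux.pick v0 T₀).2.1 with hQ
    set R := (TetAux.pick v0 T₀).2.2.1 with hR
    rw [hTz₀] at hc₀
    obtain ⟨h12, h13, h14, h23, h24, h34⟩ := TetAux.dist4 hc₀
    have hPS : P ∈ S := hT₀S (by rw [hTz₀]; simp)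
    have hQS : Q ∈ S := hT₀S (by rw [hTz₀]; simp)
    have hRS : R ∈ S := hT₀S (by rw [hTz₀]; simp)
    set A := S.filter (fun s => TetAux.GoodT v0 P Q R s) with hAdef
    have hAspec : ∀ s, s ∈ A ↔ s ∈ S ∧ TetAux.GoodT v0 P Q R s := by
      intro s; rw [hAdef, Finset.mem_filter]
    have hcore : A.card ≤ 4 :=
      TetAux.core hv0 S hmin hPS hQS hRS h12 h13 h23 A hAspec
    refine le_trans (Finset.card_le_card_of_injOn
      (fun T => (TetAux.pick v0 T).2.2.2) ?_ ?_) hcore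
    · -- maps to A
      intro T hT
      have hTm := (hfibspec T).mp hT
      obtain ⟨hTS, hc, hz⟩ := hM'mem T hTm.1
      obtain ⟨hTz, hG⟩ := TetAux.pick_spec (v0 := v0) hz
      have hfaceT : ({(TetAux.pick v0 T).1, (TetAux.pick v0 T).2.1,
          (TetAux.pick v0 T).2.2.1} : Finset (Fin 3 → ℝ)) = t := hTm.2
      obtain ⟨p, q, r, sT, hpk⟩ : ∃ p q r sT, TetAux.pick v0 T = (p, q, r, sT) :=
        ⟨_, _, _, _, rfl⟩
      simp only [hpk] at hTz hG hfaceT ⊢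
      rw [hTz] at hc
      obtain ⟨k12, k13, k14, k23, k24, k34⟩ := TetAux.dist4 hc
      rw [Finset.mem_coe, hAspec]
      constructor
      · exact hTS (by rw [hTz]; simp)
      · refine TetAux.good_of_triple_eq hG k12 k13 k23 ?_
        rw [hfaceT, ← hface₀]
    · -- injective on fib
      intro T hT T' hT' happ
      obtain ⟨hTm, hfaceT⟩ := (hfibspec T).mp (Finset.mem_coe.mp hT)
      obtain ⟨hTm', hfaceT'⟩ := (hfibspec T').mp (Finset.mem_coe.mp hT')
      obtain ⟨hTS, hc, hz⟩ := hM'mem T hTm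
      obtain ⟨hTz, hG⟩ := TetAux.pick_spec (v0 := v0) hz
      obtain ⟨hTS', hc', hz'⟩ := hM'mem T' hTm'
      obtain ⟨hTz', hG'⟩ := TetAux.pick_spec (v0 := v0) hz'
      obtain ⟨p, q, r, sT, hpk⟩ : ∃ p q r sT, TetAux.pick v0 T = (p, q, r, sT) :=
        ⟨_, _, _, _, rfl⟩
      obtain ⟨p', q', r', sT', hpk'⟩ : ∃ p q r sT, TetAux.pick v0 T' = (p, q, r, sT) :=
        ⟨_, _, _, _, rfl⟩
      simp only [hpk] at hTz hfaceT
      simp only [hpk'] at hTz' hfaceT'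
      simp only [hpk, hpk'] at happ
      have e1 : T = insert sT t := by
        rw [hTz, ← hfaceT]
        ext x
        simp only [Finset.mem_insert, Finset.mem_singleton]
        tauto
      have e2 : T' = insert sT' t := by
        rw [hTz', ← hfaceT']
        ext x
        simp only [Finset.mem_insert, Finset.mem_singleton]
        tauto
      rw [e1, e2, happ]
  calc M'.card ≤ 4 * (S.powersetCard 3).card :=
        Finset.card_le_mul_card_image_of_maps_to hmaps 4 (by
          intro t ht
          exact hfib t _ (fun T => by rw [Finset.mem_filter]))
    _ = 4 * n.choose 3 := by rw [Finset.card_powersetCard, hn]
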